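/- Let A and B be closed subsets of a complete metric space X and let x̄ ∈ A ∩ B. Then A and B are subtransversal at x̄ if and only if there exist δ > 0 and κ > 0 such that for all x ∈ A ∩ B_δ(x̄) and y ∈ B ∩ B_δ(x̄) with x ≠ y, the nonlocal slope of the coupling function satisfies |∇φ|◇(x, y) = sup_{(u,v) ≠ (x,y)} max{φ(x,y) − φ(u,v), 0} / d((x,y),(u,v)) ≥ κ. -/

import Mathlib

open Metric Set Filter
open scoped ENNReal Topology

/-- Subtransversality of closed sets `A`, `B` at a point `x0 ∈ A ∩ B`. -/
def Subtrans {X : Type*} [MetricSpace X] (A B : Set X) (x0 : X) : Prop :=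
  ∃ K > 0, ∃ δ > 0, ∀ x ∈ Metric.ball x0 δ,
    EMetric.infEdist x (A ∩ B) ≤
      ENNReal.ofReal K * (EMetric.infEdist x A + EMetric.infEdist x B)

/-- `setInd S x` is `0` if `x ∈ S` and `+∞` otherwise (indicator in `ℝ≥0∞`). -/
noncomputable def setInd {X : Type*} (S : Set X) (x : X) : ℝ≥0∞ :=
  ⨅ (_ : x ∈ S), 0

/-- The coupling function `φ(x,y) = δ_A(x) + d(x,y) + δ_B(y)` of the sets `A` and `B`. -/
noncomputable def coupling {X : Type*} [MetricSpace X] (A B : Set X) (p : X × X) : ℝ≥0∞ :=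
  setInd A p.1 + ENNReal.ofReal (dist p.1 p.2) + setInd B p.2

/-- The nonlocal slope `|∇φ|◇(x,y)` of the coupling function of `A` and `B`,
with `X × X` carrying the sum metric. -/
noncomputable def couplingNLSlope {X : Type*} [MetricSpace X] (A B : Set X) (x y : X) : ℝ≥0∞ :=
  ⨆ (p : X × X) (_ : p ≠ (x, y)),
    (coupling A B (x, y) - coupling A B p) / ENNReal.ofReal (dist x p.1 + dist y p.2)

/-- The (local) slope `|∇φ|(x,y)` of the coupling function of `A` and `B`,
with `X × X` carrying the sum metric. -/
noncomputable def couplingSlope {X : Type*} [MetricSpace X] (A B : Set X) (x y : X) : ℝ≥0∞ :=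
  Filter.limsup
    (fun p : X × X =>
      (coupling A B (x, y) - coupling A B p) / ENNReal.ofReal (dist x p.1 + dist y p.2))
    (nhdsWithin (x, y) {q | q ≠ (x, y)})

lemma setInd_of_mem {X : Type*} {S : Set X} {x : X} (h : x ∈ S) : setInd S x = 0 := by
  simp [setInd, h]

lemma setInd_of_not_mem {X : Type*} {S : Set X} {x : X} (h : x ∉ S) : setInd S x = ⊤ := by
  simp [setInd, h]

lemma coupling_of_mem {X : Type*} [MetricSpace X] {A B : Set X} {x y : X}
    (hx : x ∈ A) (hy : y ∈ B) : coupling A B (x, y) = ENNReal.ofReal (dist x y) := by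
  simp [coupling, setInd_of_mem hx, setInd_of_mem hy]

lemma coupling_of_not_mem {X : Type*} [MetricSpace X] {A B : Set X} {p : X × X}
    (h : ¬(p.1 ∈ A ∧ p.2 ∈ B)) : coupling A B p = ⊤ := by
  by_cases h1 : p.1 ∈ A
  · have h2 : p.2 ∉ B := fun h2 => h ⟨h1, h2⟩
    simp [coupling, setInd_of_not_mem h2]
  · simp [coupling, setInd_of_not_mem h1]

lemma slope_le_of_min {X : Type*} [MetricSpace X] {A B : Set X} {a b : X} {l : ℝ}
    (hl : 0 ≤ l) (ha : a ∈ A) (hb : b ∈ B)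
    (hmin : ∀ u ∈ A, ∀ v ∈ B, dist a b ≤ dist u v + l * (dist a u + dist b v)) :
    couplingNLSlope A B a b ≤ ENNReal.ofReal l := by
  refine iSup₂_le fun p hp => ?_
  by_cases hpm : p.1 ∈ A ∧ p.2 ∈ B
  · refine ENNReal.div_le_of_le_mul ?_
    have hcp : coupling A B p = ENNReal.ofReal (dist p.1 p.2) :=
      coupling_of_mem (x := p.1) (y := p.2) hpm.1 hpm.2
    have key := hmin p.1 hpm.1 p.2 hpm.2
    rw [coupling_of_mem ha hb, hcp, ← ENNReal.ofReal_sub _ dist_nonneg,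
      ← ENNReal.ofReal_mul hl]
    exact ENNReal.ofReal_le_ofReal (by linarith)
  · rw [coupling_of_not_mem hpm, ENNReal.sub_top, ENNReal.zero_div]
    exact zero_le

lemma ekeland_pair {X : Type*} [MetricSpace X] [CompleteSpace X] {A B : Set X}
    (hA : IsClosed A) (hB : IsClosed B) {l : ℝ} (hl : 0 < l) {a0 b0 : X}
    (ha0 : a0 ∈ A) (hb0 : b0 ∈ B) :
    ∃ a ∈ A, ∃ b ∈ B, dist a0 a + dist b0 b ≤ dist a0 b0 / l ∧
      ∀ u ∈ A, ∀ v ∈ B, dist a b ≤ dist u v + l * (dist a u + dist b v) := by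
  have step : ∀ (n : ℕ) (p : X × X), ∃ q : X × X, p.1 ∈ A → p.2 ∈ B →
      q.1 ∈ A ∧ q.2 ∈ B ∧
      dist q.1 q.2 + l * (dist p.1 q.1 + dist p.2 q.2) ≤ dist p.1 p.2 ∧
      ∀ r : X × X, r.1 ∈ A → r.2 ∈ B →
        dist r.1 r.2 + l * (dist p.1 r.1 + dist p.2 r.2) ≤ dist p.1 p.2 →
        dist q.1 q.2 ≤ dist r.1 r.2 + (1/2 : ℝ)^n := by
    intro n p
    by_cases hp : p.1 ∈ A ∧ p.2 ∈ B
    · obtain ⟨hp1, hp2⟩ := hp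
      set S : Set (X × X) := {q : X × X | q.1 ∈ A ∧ q.2 ∈ B ∧
        dist q.1 q.2 + l * (dist p.1 q.1 + dist p.2 q.2) ≤ dist p.1 p.2} with hS
      set T : Set ℝ := (fun q : X × X => dist q.1 q.2) '' S with hT
      have hpS : p ∈ S := ⟨hp1, hp2, by simp⟩
      have hTne : T.Nonempty := ⟨dist p.1 p.2, p, hpS, rfl⟩
      have hTbdd : BddBelow T := ⟨0, fun t ht => by
        obtain ⟨q, _, rfl⟩ := ht; exact dist_nonneg⟩
      have hlt : sInf T < sInf T + (1/2 : ℝ)^n := by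
        have : (0:ℝ) < (1/2:ℝ)^n := by positivity
        linarith
      obtain ⟨t, ht, htlt⟩ := (csInf_lt_iff hTbdd hTne).1 hlt
      obtain ⟨q, hqS, rfl⟩ := ht
      refine ⟨q, fun _ _ => ⟨hqS.1, hqS.2.1, hqS.2.2, fun r hr1 hr2 hr3 => ?_⟩⟩
      have : sInf T ≤ dist r.1 r.2 := csInf_le hTbdd ⟨r, ⟨hr1, hr2, hr3⟩, rfl⟩
      linarith
    · exact ⟨p, fun h1 h2 => absurd ⟨h1, h2⟩ hp⟩
  choose F hF using step
  set seq : ℕ → X × X := fun n => Nat.rec (a0, b0) (fun n q => F n q) n with hseq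
  have hsucc : ∀ n, seq (n+1) = F n (seq n) := fun n => rfl
  have hmem : ∀ n, (seq n).1 ∈ A ∧ (seq n).2 ∈ B := by
    intro n
    induction n with
    | zero => exact ⟨ha0, hb0⟩
    | succ n ih =>
      rw [hsucc]
      exact ⟨(hF n (seq n) ih.1 ih.2).1, (hF n (seq n) ih.1 ih.2).2.1⟩
  have hdec : ∀ n, dist (seq (n+1)).1 (seq (n+1)).2 +
      l * (dist (seq n).1 (seq (n+1)).1 + dist (seq n).2 (seq (n+1)).2) ≤
      dist (seq n).1 (seq n).2 := by
    intro n; rw [hsucc]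
    exact (hF n (seq n) (hmem n).1 (hmem n).2).2.2.1
  have hmin : ∀ n, ∀ r : X × X, r.1 ∈ A → r.2 ∈ B →
      dist r.1 r.2 + l * (dist (seq n).1 r.1 + dist (seq n).2 r.2) ≤
        dist (seq n).1 (seq n).2 →
      dist (seq (n+1)).1 (seq (n+1)).2 ≤ dist r.1 r.2 + (1/2 : ℝ)^n := by
    intro n; rw [hsucc]
    exact (hF n (seq n) (hmem n).1 (hmem n).2).2.2.2
  set w : ℕ → ℝ := fun n => dist (seq n).1 (seq n).2 with hw
  set uv : ℕ → ℝ := fun n => dist (seq n).1 (seq (n+1)).1 + dist (seq n).2 (seq (n+1)).2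
    with huv
  have huv_nonneg : ∀ n, 0 ≤ uv n := fun n => by positivity
  have hw_nonneg : ∀ n, 0 ≤ w n := fun n => dist_nonneg
  have hw_anti : Antitone w := by
    refine antitone_nat_of_succ_le fun n => ?_
    have := hdec n
    have h0 := huv_nonneg n
    simp only [huv] at h0
    nlinarith
  have hsum_le : ∀ N, ∑ k ∈ Finset.range N, uv k ≤ w 0 / l := by
    intro N
    have h1 : ∑ k ∈ Finset.range N, (w k - w (k+1)) = w 0 - w N :=
      Finset.sum_range_sub' w N
    have h2 : ∑ k ∈ Finset.range N, l * uv k ≤ ∑ k ∈ Finset.range N, (w k - w (k+1)) := by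
      refine Finset.sum_le_sum fun k _ => ?_
      have := hdec k
      simp only [huv, hw]
      nlinarith
    rw [← Finset.mul_sum, h1] at h2
    have := hw_nonneg N
    rw [le_div_iff₀ hl]
    nlinarith
  have hsumm : Summable uv := summable_of_sum_range_le huv_nonneg hsum_le
  have hsu : Summable (fun n => dist (seq n).1 (seq (n+1)).1) :=
    hsumm.of_nonneg_of_le (fun _ => dist_nonneg)
      (fun n => le_add_of_nonneg_right dist_nonneg)
  have hsv : Summable (fun n => dist (seq n).2 (seq (n+1)).2) :=
    hsumm.of_nonneg_of_le (fun _ => dist_nonneg)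
      (fun n => le_add_of_nonneg_left dist_nonneg)
  obtain ⟨a, ha_lim⟩ := cauchySeq_tendsto_of_complete (cauchySeq_of_summable_dist hsu)
  obtain ⟨b, hb_lim⟩ := cauchySeq_tendsto_of_complete (cauchySeq_of_summable_dist hsv)
  have haA : a ∈ A := hA.mem_of_tendsto ha_lim (Eventually.of_forall fun n => (hmem n).1)
  have hbB : b ∈ B := hB.mem_of_tendsto hb_lim (Eventually.of_forall fun n => (hmem n).2)
  have hda : dist a0 a ≤ ∑' n, dist (seq n).1 (seq (n+1)).1 :=
    dist_le_tsum_dist_of_tendsto₀ hsu ha_lim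
  have hdb : dist b0 b ≤ ∑' n, dist (seq n).2 (seq (n+1)).2 :=
    dist_le_tsum_dist_of_tendsto₀ hsv hb_lim
  have htsum : (∑' n, dist (seq n).1 (seq (n+1)).1) + ∑' n, dist (seq n).2 (seq (n+1)).2
      ≤ dist a0 b0 / l := by
    rw [← Summable.tsum_add hsu hsv]
    exact Summable.tsum_le_of_sum_range_le hsumm hsum_le
  refine ⟨a, haA, b, hbB, by linarith, ?_⟩
  intro u hu v hv
  by_contra hcon
  push_neg at hcon
  have hwlim : Tendsto w atTop (𝓝 (dist a b)) := ha_lim.dist hb_lim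
  have hw_ge : ∀ n, dist a b ≤ w n := fun n =>
    le_of_tendsto hwlim (eventually_atTop.2 ⟨n, fun m hm => hw_anti hm⟩)
  have h1 : Tendsto (fun n => dist (seq n).1 a) atTop (𝓝 0) := by
    simpa using ha_lim.dist (tendsto_const_nhds (x := a))
  have h2 : Tendsto (fun n => dist (seq n).2 b) atTop (𝓝 0) := by
    simpa using hb_lim.dist (tendsto_const_nhds (x := b))
  have hgap : Tendsto (fun n => l * (dist (seq n).1 a + dist (seq n).2 b)) atTop (𝓝 0) := by
    have := (h1.add h2).const_mul l
    simpa using this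
  have hgpos : (0:ℝ) < dist a b - (dist u v + l * (dist a u + dist b v)) := by linarith
  have hev : ∀ᶠ n in atTop, l * (dist (seq n).1 a + dist (seq n).2 b) <
      dist a b - (dist u v + l * (dist a u + dist b v)) :=
    hgap.eventually_lt_const hgpos
  have hev2 : ∀ᶠ n in atTop, dist a b ≤ dist u v + (1/2 : ℝ)^n := by
    filter_upwards [hev] with n hn
    have htr1 : dist (seq n).1 u ≤ dist (seq n).1 a + dist a u := dist_triangle _ _ _
    have htr2 : dist (seq n).2 v ≤ dist (seq n).2 b + dist b v := dist_triangle _ _ _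
    have hSn : dist u v + l * (dist (seq n).1 u + dist (seq n).2 v) ≤
        dist (seq n).1 (seq n).2 := by
      have hge := hw_ge n
      simp only [hw] at hge
      nlinarith
    have hm1 := hmin n (u, v) hu hv hSn
    have hm2 := hw_ge (n+1)
    simp only [hw] at hm2
    calc dist a b ≤ dist (seq (n+1)).1 (seq (n+1)).2 := hm2
      _ ≤ dist u v + (1/2 : ℝ)^n := hm1
  have hlim2 : Tendsto (fun n : ℕ => dist u v + (1/2 : ℝ)^n) atTop (𝓝 (dist u v)) := by
    have h3 : Tendsto (fun n : ℕ => (1/2 : ℝ)^n) atTop (𝓝 0) := by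
      apply tendsto_pow_atTop_nhds_zero_of_lt_one <;> norm_num
    simpa using tendsto_const_nhds.add h3
  have hfin : dist a b ≤ dist u v := ge_of_tendsto hlim2 hev2
  have hnn : 0 ≤ l * (dist a u + dist b v) := by positivity
  linarith

theorem stmt4 {X : Type*} [MetricSpace X] [CompleteSpace X]
    {A B : Set X} (hA : IsClosed A) (hB : IsClosed B) {xbar : X} (hx : xbar ∈ A ∩ B) :
    Subtrans A B xbar ↔
      ∃ δ > 0, ∃ κ > 0, ∀ x ∈ A ∩ Metric.ball xbar δ, ∀ y ∈ B ∩ Metric.ball xbar δ,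
        x ≠ y → ENNReal.ofReal κ ≤ couplingNLSlope A B x y := by
  constructor
  · rintro ⟨K, hK, δ, hδ, hsub⟩
    refine ⟨δ, hδ, 1 / (2*K+3), by positivity, ?_⟩
    rintro x ⟨hxA, hxball⟩ y ⟨hyB, hyball⟩ hxy
    have hd : (0:ℝ) < dist x y := dist_pos.2 hxy
    have h2K3 : (0:ℝ) < 2*K+3 := by linarith
    -- find w ∈ A ∩ B with dist x w < (K+1) * dist x y
    have h1 : EMetric.infEdist x (A ∩ B) < ENNReal.ofReal ((K+1) * dist x y) := by
      refine lt_of_le_of_lt (hsub x hxball) ?_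
      have hA0 : EMetric.infEdist x A = 0 := EMetric.infEdist_zero_of_mem hxA
      have hB0 : EMetric.infEdist x B ≤ edist x y := EMetric.infEdist_le_edist_of_mem hyB
      calc ENNReal.ofReal K * (EMetric.infEdist x A + EMetric.infEdist x B)
          ≤ ENNReal.ofReal K * ENNReal.ofReal (dist x y) := by
            rw [hA0, zero_add, ← edist_dist]
            exact mul_le_mul_right hB0 _
        _ = ENNReal.ofReal (K * dist x y) := (ENNReal.ofReal_mul hK.le).symm
        _ < ENNReal.ofReal ((K+1) * dist x y) := by
            rw [ENNReal.ofReal_lt_ofReal_iff (by positivity)]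
            nlinarith
    obtain ⟨w, hw, hwd⟩ := EMetric.infEdist_lt_iff.1 h1
    rw [edist_dist, ENNReal.ofReal_lt_ofReal_iff (by positivity)] at hwd
    have hne : ((w, w) : X × X) ≠ (x, y) := by
      intro h
      rw [Prod.mk.injEq] at h
      exact hxy (h.1.symm.trans h.2)
    have hD0 : 0 < dist x w + dist y w := by
      rcases (lt_or_eq_of_le (by positivity : (0:ℝ) ≤ dist x w + dist y w)) with h | h
      · exact h
      · exfalso
        have h1' : dist x w = 0 := by
          linarith [dist_nonneg (x := y) (y := w), dist_nonneg (x := x) (y := w)]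
        have h2' : dist y w = 0 := by
          linarith [dist_nonneg (x := y) (y := w), dist_nonneg (x := x) (y := w)]
        exact hxy ((dist_eq_zero.1 h1').trans (dist_eq_zero.1 h2').symm)
    have hDlt : dist x w + dist y w ≤ (2*K+3) * dist x y := by
      have : dist y w ≤ dist y x + dist x w := dist_triangle _ _ _
      rw [dist_comm y x] at this
      nlinarith
    have hterm : ENNReal.ofReal (1 / (2*K+3)) ≤
        (coupling A B (x, y) - coupling A B (w, w)) /
          ENNReal.ofReal (dist x w + dist y w) := by
      rw [coupling_of_mem hxA hyB, coupling_of_mem hw.1 hw.2, dist_self,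
        ENNReal.ofReal_zero, tsub_zero, ← ENNReal.ofReal_div_of_pos hD0]
      refine ENNReal.ofReal_le_ofReal ?_
      rw [le_div_iff₀ hD0, div_mul_eq_mul_div, div_le_iff₀ h2K3]
      nlinarith
    refine hterm.trans ?_
    exact le_iSup₂ (f := fun (p : X × X) (_ : p ≠ (x, y)) =>
      (coupling A B (x, y) - coupling A B p) / ENNReal.ofReal (dist x p.1 + dist y p.2))
      (w, w) hne
  · rintro ⟨δ, hδ, κ, hκ, hslope⟩
    set l : ℝ := κ / 2 with hldef
    have hl : 0 < l := by positivity
    set δ' : ℝ := δ * l / (4 + 3 * l) with hδ'def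
    have hδ' : 0 < δ' := by positivity
    have hABne : (A ∩ B).Nonempty := ⟨xbar, hx⟩
    refine ⟨1 + 1 / l, by positivity, δ', hδ', ?_⟩
    intro x hxball
    set r : ℝ := infDist x A with hrdef
    set s : ℝ := infDist x B with hsdef
    have hr0 : 0 ≤ r := infDist_nonneg
    have hs0 : 0 ≤ s := infDist_nonneg
    have hxd : dist x xbar < δ' := mem_ball.1 hxball
    have hrlt : r < δ' := lt_of_le_of_lt (infDist_le_dist_of_mem hx.1) hxd
    have hslt : s < δ' := lt_of_le_of_lt (infDist_le_dist_of_mem hx.2) hxd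
    -- the real-valued estimate with an epsilon of room
    have hmain : ∀ ε : ℝ, 0 < ε → ε ≤ δ' →
        infDist x (A ∩ B) ≤ (1 + 1/l) * (r + s) + (1 + 2/l) * ε := by
      intro ε hε hεδ
      obtain ⟨a0, ha0A, ha0d⟩ := (infDist_lt_iff ⟨xbar, hx.1⟩).1
        (show infDist x A < r + ε by simp only [← hrdef]; linarith)
      obtain ⟨b0, hb0B, hb0d⟩ := (infDist_lt_iff ⟨xbar, hx.2⟩).1
        (show infDist x B < s + ε by simp only [← hsdef]; linarith)
      obtain ⟨a, haA, b, hbB, hdist, hmin⟩ := ekeland_pair hA hB hl ha0A hb0B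
      have hab0 : dist a0 b0 ≤ r + s + 2 * ε := by
        have htr := dist_triangle a0 x b0
        rw [dist_comm a0 x] at htr
        linarith
      have hdistl : l * (dist a0 a + dist b0 b) ≤ r + s + 2 * ε := by
        have h' : dist a0 a + dist b0 b ≤ (r + s + 2 * ε) / l :=
          hdist.trans (by gcongr)
        exact (le_div_iff₀' hl).1 h'
      have hδeq : 4 * δ' / l + 3 * δ' = δ := by
        rw [hδ'def]
        field_simp
      have hsteps : dist a0 a + dist b0 b ≤ 4 * δ' / l := by
        rw [le_div_iff₀ hl, mul_comm]
        nlinarith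
      have haball : a ∈ Metric.ball xbar δ := by
        rw [mem_ball]
        have t1 : dist a xbar ≤ dist a a0 + dist a0 x + dist x xbar :=
          dist_triangle4 a a0 x xbar
        rw [dist_comm a a0, dist_comm a0 x] at t1
        have hb0' : 0 ≤ dist b0 b := dist_nonneg
        linarith
      have hbball : b ∈ Metric.ball xbar δ := by
        rw [mem_ball]
        have t1 : dist b xbar ≤ dist b b0 + dist b0 x + dist x xbar :=
          dist_triangle4 b b0 x xbar
        rw [dist_comm b b0, dist_comm b0 x] at t1
        have ha0' : 0 ≤ dist a0 a := dist_nonneg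
        linarith
      have hab : a = b := by
        by_contra habne
        have hge := hslope a ⟨haA, haball⟩ b ⟨hbB, hbball⟩ habne
        have hle := slope_le_of_min hl.le haA hbB hmin
        have : κ ≤ l := (ENNReal.ofReal_le_ofReal_iff hl.le).1 (hge.trans hle)
        rw [hldef] at this
        linarith
      have hamem : a ∈ A ∩ B := ⟨haA, hab ▸ hbB⟩
      have hbound : infDist x (A ∩ B) ≤ (r + ε) + (r + s + 2 * ε) / l := by
        have h1' : infDist x (A ∩ B) ≤ dist x a := infDist_le_dist_of_mem hamem
        have h2' : dist x a ≤ dist x a0 + dist a0 a := dist_triangle _ _ _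
        have h3' : dist a0 a ≤ (r + s + 2 * ε) / l := by
          rw [le_div_iff₀ hl, mul_comm]
          nlinarith [dist_nonneg (x := b0) (y := b)]
        linarith
      have e1 : (1 + 1/l) * (r + s) + (1 + 2/l) * ε
          = (r + s) + (r + s)/l + ε + 2 * (ε/l) := by ring
      have e2 : (r + ε) + (r + s + 2 * ε)/l = r + ε + (r + s)/l + 2 * (ε/l) := by ring
      linarith
    -- remove the epsilon
    have hreal : infDist x (A ∩ B) ≤ (1 + 1/l) * (r + s) := by
      by_contra hcon
      push_neg at hcon
      set g : ℝ := infDist x (A ∩ B) - (1 + 1/l) * (r + s) with hgdef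
      have hg : 0 < g := by simp only [hgdef]; linarith
      set C : ℝ := 1 + 2/l with hCdef
      have hC : 0 < C := by positivity
      set ε : ℝ := min δ' (g / (2 * C)) with hεdef
      have hε : 0 < ε := lt_min hδ' (by positivity)
      have hεδ : ε ≤ δ' := min_le_left _ _
      have hb2 := hmain ε hε hεδ
      have hεg : C * ε ≤ g / 2 := by
        have h1' : ε ≤ g / (2 * C) := min_le_right _ _
        rw [hεdef] at h1' ⊢
        calc C * min δ' (g / (2 * C)) ≤ C * (g / (2 * C)) := by
              exact mul_le_mul_of_nonneg_left h1' hC.le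
          _ = g / 2 := by field_simp
      simp only [hgdef] at hεg
      linarith
    -- convert to ENNReal
    have hiAB : EMetric.infEdist x (A ∩ B) = ENNReal.ofReal (infDist x (A ∩ B)) :=
      (ENNReal.ofReal_toReal (Metric.infEdist_ne_top hABne)).symm
    have hiA : EMetric.infEdist x A = ENNReal.ofReal r :=
      (ENNReal.ofReal_toReal (Metric.infEdist_ne_top ⟨xbar, hx.1⟩)).symm
    have hiB : EMetric.infEdist x B = ENNReal.ofReal s :=
      (ENNReal.ofReal_toReal (Metric.infEdist_ne_top ⟨xbar, hx.2⟩)).symm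
    rw [hiAB, hiA, hiB, ← ENNReal.ofReal_add hr0 hs0,
      ← ENNReal.ofReal_mul (by positivity)]
    exact ENNReal.ofReal_le_ofReal hreal
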